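/- Let u : Fin N → ℝ be a probability mass function with positive entries and a unique maximizing index M (u M > u i for all i ≠ M). Define f(ϖ, x) = u x * exp(ϖ*(1 - u x)) / (∑ i, u i * exp(ϖ*(1 - u i))). Then f(ϖ, M) → 1 as ϖ → -∞, and f(ϖ, x) → 0 as ϖ → -∞ for every x ≠ M. -/

import Mathlib

open Filter Real

theorem stmt_11 (N : ℕ) (hN : 2 ≤ N) (u : Fin N → ℝ)
    (hpos : ∀ i, 0 < u i) (hsum : ∑ i, u i = 1)
    (M : Fin N) (hmax : ∀ i, i ≠ M → u i < u M) :
    Filter.Tendsto (fun ϖ : ℝ => u M * Real.exp (ϖ * (1 - u M)) /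
      (∑ i, u i * Real.exp (ϖ * (1 - u i)))) Filter.atBot (nhds 1) ∧
    ∀ x, x ≠ M → Filter.Tendsto (fun ϖ : ℝ => u x * Real.exp (ϖ * (1 - u x)) /
      (∑ i, u i * Real.exp (ϖ * (1 - u i)))) Filter.atBot (nhds 0) := by
  have hM : 0 < u M := hpos M
  set g : Fin N → ℝ → ℝ := fun i ϖ => (u i / u M) * Real.exp (ϖ * (u M - u i)) with hg
  have hgi : ∀ i, i ≠ M → Tendsto (g i) atBot (nhds 0) := by
    intro i hi
    have hc : 0 < u M - u i := sub_pos.mpr (hmax i hi)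
    have h1 : Tendsto (fun ϖ : ℝ => ϖ * (u M - u i)) atBot atBot :=
      tendsto_id.atBot_mul_const hc
    have h2 := Real.tendsto_exp_atBot.comp h1
    have := h2.const_mul (u i / u M)
    simpa [hg, Function.comp, mul_zero] using this
  have hgM : Tendsto (g M) atBot (nhds 1) := by
    have h : g M = fun _ => 1 := by
      funext ϖ; simp [hg, sub_self, div_self hM.ne']
    rw [h]; exact tendsto_const_nhds
  have hsumg : Tendsto (fun ϖ => ∑ i, g i ϖ) atBot (nhds 1) := by
    have h : Tendsto (fun ϖ => ∑ i, g i ϖ) atBot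
        (nhds (∑ i, if i = M then (1:ℝ) else 0)) := by
      refine tendsto_finset_sum _ (fun i _ => ?_)
      by_cases h : i = M
      · subst h; simpa using hgM
      · simpa [h] using hgi i h
    simpa using h
  have key : ∀ x, (fun ϖ : ℝ => u x * Real.exp (ϖ * (1 - u x)) /
      (∑ i, u i * Real.exp (ϖ * (1 - u i)))) = fun ϖ => g x ϖ / ∑ i, g i ϖ := by
    intro x
    funext ϖ
    have hc : (0:ℝ) < u M * Real.exp (ϖ * (1 - u M)) := mul_pos hM (Real.exp_pos _)
    have hgeq : ∀ i, g i ϖ =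
        (u i * Real.exp (ϖ * (1 - u i))) / (u M * Real.exp (ϖ * (1 - u M))) := by
      intro i
      have h : ϖ * (u M - u i) = ϖ * (1 - u i) - ϖ * (1 - u M) := by ring
      simp only [hg, h, Real.exp_sub]
      field_simp
    have hD : 0 < ∑ i, u i * Real.exp (ϖ * (1 - u i)) :=
      Finset.sum_pos (fun i _ => mul_pos (hpos i) (Real.exp_pos _)) ⟨M, Finset.mem_univ M⟩
    rw [hgeq x, Finset.sum_congr rfl (fun i _ => hgeq i), ← Finset.sum_div]
    rw [div_div_div_cancel_right₀]
    exact hc.ne'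
  constructor
  · rw [key M]
    have h := hgM.div hsumg one_ne_zero; rw [div_one] at h; exact h
  · intro x hx
    rw [key x]
    have h := (hgi x hx).div hsumg one_ne_zero; rw [zero_div] at h; exact h
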